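/- arXiv:2505.09584 — 3 statements merged into one kernel-verified Lean document; each statement's English description precedes it below -/
import Mathlib

section
/- Let S = {v_1, ..., v_n} ⊂ R^q with Fermat-Weber function f(x) = (1/n)·Σ_j d_tr(x, v_j) and Fermat-Weber set FW(S) (the set of minimizers of f, which is nonempty and closed). Then for every x ∈ R^q, (1/n)·d_tr(x, FW(S)) ≤ f(x) − min_y f(y), where d_tr(x, FW(S)) = inf_{y ∈ FW(S)} d_tr(x, y). -/
/-- The tropical symmetric distance on `ℝ^q`. -/
noncomputable def dtr (q : ℕ) [NeZero q] (x y : Fin q → ℝ) : ℝ :=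
  (Finset.univ.sup' Finset.univ_nonempty fun i => y i - x i) -
  (Finset.univ.inf' Finset.univ_nonempty fun i => y i - x i)

/-- The Fermat-Weber function of the sample `v 1, …, v n`. -/
noncomputable def fwFun (q n : ℕ) [NeZero q] (v : Fin n → Fin q → ℝ)
    (x : Fin q → ℝ) : ℝ :=
  (1 / (n : ℝ)) * ∑ j, dtr q x (v j)

/-- The set of Fermat-Weber points: global minimizers of the Fermat-Weber function. -/
noncomputable def FW (q n : ℕ) [NeZero q] (v : Fin n → Fin q → ℝ) : Set (Fin q → ℝ) :=
  {x | ∀ z : Fin q → ℝ, fwFun q n v x ≤ fwFun q n v z}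

open Finset

set_option linter.unnecessarySeqFocus false

section helpers
variable {q : ℕ} [NeZero q]

lemma my_sup'_add_const {α : Type*} (s : Finset α) (h : s.Nonempty) (f : α → ℝ) (a : ℝ) :
    (s.sup' h fun i => f i + a) = s.sup' h f + a := by
  apply le_antisymm
  · exact Finset.sup'_le _ _ fun b hb => by
      have := Finset.le_sup' f hb; linarith
  · rw [← le_sub_iff_add_le]
    apply Finset.sup'_le _ _ fun b hb => ?_
    have := Finset.le_sup' (fun i => f i + a) hb
    linarith

lemma my_inf'_add_const {α : Type*} (s : Finset α) (h : s.Nonempty) (f : α → ℝ) (a : ℝ) :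
    (s.inf' h fun i => f i + a) = s.inf' h f + a := by
  apply le_antisymm
  · obtain ⟨b, hb, hbe⟩ := Finset.exists_mem_eq_inf' h f
    have := Finset.inf'_le (fun i => f i + a) hb
    rw [hbe]; exact this
  · apply Finset.le_inf' _ _ fun b hb => by
      have := Finset.inf'_le f hb; linarith

lemma my_inf'_le_sup' {α : Type*} (s : Finset α) (h : s.Nonempty) (f : α → ℝ) :
    s.inf' h f ≤ s.sup' h f := by
  obtain ⟨i, hi⟩ := h
  exact le_trans (Finset.inf'_le f hi) (Finset.le_sup' f hi)

lemma my_continuous_sup' {α X : Type*} [TopologicalSpace X] (s : Finset α) (h : s.Nonempty)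
    (f : α → X → ℝ) (hf : ∀ i, Continuous (f i)) :
    Continuous fun x => s.sup' h fun i => f i x := by
  induction h using Finset.Nonempty.cons_induction with
  | singleton a => simp only [Finset.sup'_singleton]; exact hf a
  | cons a s ha hs ih => simp only [Finset.sup'_cons hs]; exact (hf a).max ih

lemma my_continuous_inf' {α X : Type*} [TopologicalSpace X] (s : Finset α) (h : s.Nonempty)
    (f : α → X → ℝ) (hf : ∀ i, Continuous (f i)) :
    Continuous fun x => s.inf' h fun i => f i x := by
  induction h using Finset.Nonempty.cons_induction with
  | singleton a => simp only [Finset.inf'_singleton]; exact hf a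
  | cons a s ha hs ih => simp only [Finset.inf'_cons hs]; exact (hf a).min ih

lemma dtr_nonneg (x y : Fin q → ℝ) : 0 ≤ dtr q x y :=
  sub_nonneg.mpr (my_inf'_le_sup' _ _ _)

lemma dtr_self (x : Fin q → ℝ) : dtr q x x = 0 := by
  unfold dtr
  rw [Finset.sup'_congr Finset.univ_nonempty rfl (fun i _ => sub_self (x i)),
    Finset.inf'_congr Finset.univ_nonempty rfl (fun i _ => sub_self (x i)),
    Finset.sup'_const, Finset.inf'_const, sub_self]

lemma dtr_triangle (x y z : Fin q → ℝ) : dtr q x z ≤ dtr q x y + dtr q y z := by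
  unfold dtr
  have h1 : (Finset.univ.sup' Finset.univ_nonempty fun i => z i - x i) ≤
      (Finset.univ.sup' Finset.univ_nonempty fun i => y i - x i) +
      (Finset.univ.sup' Finset.univ_nonempty fun i => z i - y i) := by
    apply Finset.sup'_le _ _ fun i _ => ?_
    have h1 := Finset.le_sup' (fun i => y i - x i) (Finset.mem_univ i)
    have h2 := Finset.le_sup' (fun i => z i - y i) (Finset.mem_univ i)
    linarith
  have h2 : (Finset.univ.inf' Finset.univ_nonempty fun i => y i - x i) +
      (Finset.univ.inf' Finset.univ_nonempty fun i => z i - y i) ≤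
      (Finset.univ.inf' Finset.univ_nonempty fun i => z i - x i) := by
    apply Finset.le_inf' _ _ fun i _ => ?_
    have h1 := Finset.inf'_le (fun i => y i - x i) (Finset.mem_univ i)
    have h2 := Finset.inf'_le (fun i => z i - y i) (Finset.mem_univ i)
    linarith
  linarith

lemma dtr_coord (x y : Fin q → ℝ) (i k : Fin q) :
    (y i - x i) - (y k - x k) ≤ dtr q x y := by
  unfold dtr
  have h1 := Finset.le_sup' (fun i => y i - x i) (Finset.mem_univ i)
  have h2 := Finset.inf'_le (fun i => y i - x i) (Finset.mem_univ k)
  linarith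

lemma dtr_shift_fst (x y : Fin q → ℝ) (c : ℝ) :
    dtr q (fun i => x i + c) y = dtr q x y := by
  unfold dtr
  have hs : (Finset.univ.sup' Finset.univ_nonempty fun i => y i - (x i + c)) =
      Finset.univ.sup' Finset.univ_nonempty fun i => (y i - x i) + (-c) :=
    Finset.sup'_congr _ rfl fun i _ => by ring
  have hi : (Finset.univ.inf' Finset.univ_nonempty fun i => y i - (x i + c)) =
      Finset.univ.inf' Finset.univ_nonempty fun i => (y i - x i) + (-c) :=
    Finset.inf'_congr _ rfl fun i _ => by ring
  rw [hs, hi, my_sup'_add_const, my_inf'_add_const]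
  ring

lemma dtr_shift_snd (x y : Fin q → ℝ) (c : ℝ) :
    dtr q x (fun i => y i + c) = dtr q x y := by
  unfold dtr
  have hs : (Finset.univ.sup' Finset.univ_nonempty fun i => (y i + c) - x i) =
      Finset.univ.sup' Finset.univ_nonempty fun i => (y i - x i) + c :=
    Finset.sup'_congr _ rfl fun i _ => by ring
  have hi : (Finset.univ.inf' Finset.univ_nonempty fun i => (y i + c) - x i) =
      Finset.univ.inf' Finset.univ_nonempty fun i => (y i - x i) + c :=
    Finset.inf'_congr _ rfl fun i _ => by ring
  rw [hs, hi, my_sup'_add_const, my_inf'_add_const]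
  ring

lemma dtr_ind_le (w : Fin q → ℝ) (t : ℝ) (ht : 0 ≤ t) (I : Finset (Fin q)) :
    dtr q w (fun i => w i + t * (if i ∈ I then 1 else 0)) ≤ t := by
  unfold dtr
  have hs : (Finset.univ.sup' Finset.univ_nonempty
      fun i => (w i + t * (if i ∈ I then 1 else 0)) - w i) ≤ t := by
    apply Finset.sup'_le _ _ fun i _ => ?_
    split_ifs <;> simp <;> linarith
  have hi : (0:ℝ) ≤ (Finset.univ.inf' Finset.univ_nonempty
      fun i => (w i + t * (if i ∈ I then 1 else 0)) - w i) := by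
    apply Finset.le_inf' _ _ fun i _ => ?_
    split_ifs <;> simp <;> linarith
  linarith

end helpers

lemma comb {q n : ℕ} [NeZero q] (A B : Fin n → Finset (Fin q))
    (hA : ∀ j, (A j).Nonempty) (hB : ∀ j, (B j).Nonempty) :
    ∀ (k : ℕ) (u : Fin q → ℝ), (Finset.image u Finset.univ).card ≤ k →
    (∑ j, ((B j).sup' (hB j) u - (A j).inf' (hA j) u)) < 0 →
    ∃ I : Finset (Fin q),
      (∑ j, (((if ((B j) ∩ I).Nonempty then 1 else 0) : ℝ) -
        (if A j ⊆ I then 1 else 0))) < 0 := by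
  classical
  intro k
  induction k with
  | zero =>
    intro u hcard _
    have := (Finset.univ_nonempty.image u).card_pos
    omega
  | succ k ih =>
    intro u hcard hu
    set m := Finset.univ.inf' Finset.univ_nonempty u with hm
    have hle : ∀ i, m ≤ u i := fun i => Finset.inf'_le u (Finset.mem_univ i)
    by_cases hconst : ∀ i, u i = m
    · exfalso
      have hz : ∀ j, ((B j).sup' (hB j) u - (A j).inf' (hA j) u) = 0 := by
        intro j
        rw [Finset.sup'_congr (hB j) rfl (fun i _ => hconst i), Finset.sup'_const,
          Finset.inf'_congr (hA j) rfl (fun i _ => hconst i), Finset.inf'_const, sub_self]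
      rw [Finset.sum_congr rfl (fun j _ => hz j), Finset.sum_const, smul_zero] at hu
      exact lt_irrefl _ hu
    · push_neg at hconst
      obtain ⟨i0, hi0⟩ := hconst
      set I := Finset.univ.filter (fun i => m < u i) with hI
      have hmem : ∀ i, i ∈ I ↔ m < u i := fun i => by simp [hI]
      have hIne : I.Nonempty := ⟨i0, (hmem i0).2 (lt_of_le_of_ne (hle i0) (Ne.symm hi0))⟩
      set δ := I.inf' hIne u - m with hδ
      have hδpos : 0 < δ := by
        have : m < I.inf' hIne u := (Finset.lt_inf'_iff hIne).mpr (fun i hi => (hmem i).1 hi)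
        rw [hδ]; linarith
      have hinfI : ∀ i ∈ I, m + δ ≤ u i := by
        intro i hi
        have := Finset.inf'_le u hi
        rw [hδ]; linarith
      set u' := fun i => u i - δ * (if i ∈ I then 1 else 0) with hu'def
      have hu'I : ∀ i ∈ I, u' i = u i - δ := fun i hi => by simp [hu'def, hi]
      have hu'nI : ∀ i, i ∉ I → u' i = u i := fun i hi => by simp [hu'def, hi]
      have humI : ∀ i, i ∉ I → u i = m := by
        intro i hi
        have := (hmem i).not.1 hi
        push_neg at this
        exact le_antisymm this (hle i)
      have hu'ge : ∀ i, m ≤ u' i := by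
        intro i
        by_cases hi : i ∈ I
        · rw [hu'I i hi]; have := hinfI i hi; linarith
        · rw [hu'nI i hi]; exact hle i
      have keyinf : ∀ (S : Finset (Fin q)) (hS : S.Nonempty),
          S.inf' hS u = S.inf' hS u' + δ * (if S ⊆ I then 1 else 0) := by
        intro S hS
        by_cases hSI : S ⊆ I
        · rw [if_pos hSI, mul_one]
          have h1 : S.inf' hS u' = S.inf' hS (fun i => u i + (-δ)) :=
            Finset.inf'_congr hS rfl (fun i hi => by rw [hu'I i (hSI hi)]; ring)
          rw [h1, my_inf'_add_const]; ring
        · rw [if_neg hSI, mul_zero, add_zero]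
          obtain ⟨a, haS, haI⟩ := Finset.not_subset.mp hSI
          have hua : u a = m := humI a haI
          have h1 : S.inf' hS u = m :=
            le_antisymm (le_trans (Finset.inf'_le u haS) (le_of_eq hua))
              (Finset.le_inf' hS u (fun b _ => hle b))
          have h2 : S.inf' hS u' = m :=
            le_antisymm (le_trans (Finset.inf'_le u' haS)
                (le_of_eq (by rw [hu'nI a haI]; exact hua)))
              (Finset.le_inf' hS u' (fun b _ => hu'ge b))
          rw [h1, h2]
      have keysup : ∀ (S : Finset (Fin q)) (hS : S.Nonempty),
          S.sup' hS u = S.sup' hS u' + δ * (if (S ∩ I).Nonempty then 1 else 0) := by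
        intro S hS
        by_cases hSI : (S ∩ I).Nonempty
        · obtain ⟨a, ha⟩ := hSI
          rw [Finset.mem_inter] at ha
          rw [if_pos ⟨a, Finset.mem_inter.mpr ha⟩, mul_one]
          apply le_antisymm
          · apply Finset.sup'_le _ _ fun b hb => ?_
            by_cases hbI : b ∈ I
            · have := Finset.le_sup' u' hb
              rw [hu'I b hbI] at this; linarith
            · have h1 : u b = m := humI b hbI
              have h2 : m ≤ u' a := hu'ge a
              have h3 : u' a ≤ S.sup' hS u' := Finset.le_sup' u' ha.1
              linarith
          · rw [← le_sub_iff_add_le]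
            apply Finset.sup'_le _ _ fun b hb => ?_
            by_cases hbI : b ∈ I
            · have h4 := Finset.le_sup' u hb
              rw [hu'I b hbI]; linarith
            · rw [hu'nI b hbI, humI b hbI]
              have h1 : m + δ ≤ u a := hinfI a ha.2
              have h2 : u a ≤ S.sup' hS u := Finset.le_sup' u ha.1
              linarith
        · rw [if_neg hSI, mul_zero, add_zero]
          apply Finset.sup'_congr hS rfl fun i hi => ?_
          have hiI : i ∉ I := fun hiI => hSI ⟨i, Finset.mem_inter.mpr ⟨hi, hiI⟩⟩
          exact (hu'nI i hiI).symm
      -- counting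
      by_cases hcnt : (∑ j, (((if ((B j) ∩ I).Nonempty then 1 else 0) : ℝ) -
          (if A j ⊆ I then 1 else 0))) < 0
      · exact ⟨I, hcnt⟩
      · push_neg at hcnt
        apply ih u'
        · -- card decrease
          have hsub : Finset.image u' Finset.univ ⊆
              ((Finset.image u Finset.univ).filter (fun c => m < c)).image (fun c => c - δ) := by
            intro x hx
            rw [Finset.mem_image] at hx
            obtain ⟨i, _, rfl⟩ := hx
            rw [Finset.mem_image]
            by_cases hi : i ∈ I
            · exact ⟨u i, Finset.mem_filter.mpr ⟨Finset.mem_image_of_mem u (Finset.mem_univ i),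
                (hmem i).1 hi⟩, (hu'I i hi).symm⟩
            · obtain ⟨a, haI, hae⟩ := Finset.exists_mem_eq_inf' hIne u
              refine ⟨u a, Finset.mem_filter.mpr ⟨Finset.mem_image_of_mem u (Finset.mem_univ a),
                (hmem a).1 haI⟩, ?_⟩
              have : u a = m + δ := by rw [hδ, ← hae]; ring
              rw [this, hu'nI i hi, humI i hi]; ring
          have hmimg : m ∈ Finset.image u Finset.univ := by
            obtain ⟨a, _, hae⟩ := Finset.exists_mem_eq_inf' (Finset.univ_nonempty) u
            rw [Finset.mem_image]
            exact ⟨a, Finset.mem_univ a, by rw [hm, hae]⟩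
          have hlt : ((Finset.image u Finset.univ).filter (fun c => m < c)).card <
              (Finset.image u Finset.univ).card := by
            apply Finset.card_lt_card
            constructor
            · exact Finset.filter_subset _ _
            · intro hsub2
              have := Finset.mem_filter.mp (hsub2 hmimg)
              exact lt_irrefl m this.2
          calc (Finset.image u' Finset.univ).card
              ≤ _ := Finset.card_le_card hsub
            _ ≤ ((Finset.image u Finset.univ).filter (fun c => m < c)).card :=
                Finset.card_image_le
            _ ≤ k := by omega
        · have hG : (∑ j, ((B j).sup' (hB j) u' - (A j).inf' (hA j) u'))
              = (∑ j, ((B j).sup' (hB j) u - (A j).inf' (hA j) u)) -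
                δ * (∑ j, (((if ((B j) ∩ I).Nonempty then 1 else 0) : ℝ) -
                  (if A j ⊆ I then 1 else 0))) := by
            rw [Finset.mul_sum, ← Finset.sum_sub_distrib]
            apply Finset.sum_congr rfl fun j _ => ?_
            rw [keysup (B j) (hB j), keyinf (A j) (hA j)]; ring
          rw [hG]
          have : 0 ≤ δ * (∑ j, (((if ((B j) ∩ I).Nonempty then 1 else 0) : ℝ) -
              (if A j ⊆ I then 1 else 0))) := mul_nonneg (le_of_lt hδpos) hcnt
          linarith

lemma descent {q n : ℕ} [NeZero q] (hn : 0 < n) (v : Fin n → Fin q → ℝ) (w z : Fin q → ℝ)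
    (hz : (∑ j, dtr q z (v j)) < ∑ j, dtr q w (v j)) :
    ∃ (I : Finset (Fin q)) (t : ℝ), 0 < t ∧
      (∑ j, dtr q (fun i => w i + t * (if i ∈ I then 1 else 0)) (v j)) ≤
        (∑ j, dtr q w (v j)) - t := by
  classical
  haveI : Nonempty (Fin n) := ⟨⟨0, hn⟩⟩
  set c : Fin n → Fin q → ℝ := fun j i => v j i - w i with hc
  set M : Fin n → ℝ := fun j => Finset.univ.sup' Finset.univ_nonempty (c j) with hM
  set mm : Fin n → ℝ := fun j => Finset.univ.inf' Finset.univ_nonempty (c j) with hmm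
  set A : Fin n → Finset (Fin q) := fun j => Finset.univ.filter (fun i => c j i = M j) with hAdef
  set B : Fin n → Finset (Fin q) := fun j => Finset.univ.filter (fun i => c j i = mm j) with hBdef
  have hA : ∀ j, (A j).Nonempty := by
    intro j
    obtain ⟨a, _, hae⟩ := Finset.exists_mem_eq_sup' (Finset.univ_nonempty) (c j)
    exact ⟨a, Finset.mem_filter.mpr ⟨Finset.mem_univ a, hae.symm⟩⟩
  have hB : ∀ j, (B j).Nonempty := by
    intro j
    obtain ⟨b, _, hbe⟩ := Finset.exists_mem_eq_inf' (Finset.univ_nonempty) (c j)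
    exact ⟨b, Finset.mem_filter.mpr ⟨Finset.mem_univ b, hbe.symm⟩⟩
  have hcM : ∀ j i, c j i ≤ M j := fun j i => Finset.le_sup' (c j) (Finset.mem_univ i)
  have hcm : ∀ j i, mm j ≤ c j i := fun j i => Finset.inf'_le (c j) (Finset.mem_univ i)
  have hAmem : ∀ j i, i ∈ A j ↔ c j i = M j := fun j i => by
    simp [hAdef]
  have hBmem : ∀ j i, i ∈ B j ↔ c j i = mm j := fun j i => by
    simp [hBdef]
  have hFw : ∀ j, dtr q w (v j) = M j - mm j := fun j => rfl
  -- step (a)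
  set u : Fin q → ℝ := fun i => z i - w i with hu
  have ha : (∑ j, ((B j).sup' (hB j) u - (A j).inf' (hA j) u)) < 0 := by
    have hterm : ∀ j, (M j - (A j).inf' (hA j) u) - (mm j - (B j).sup' (hB j) u)
        ≤ dtr q z (v j) := by
      intro j
      obtain ⟨a, haA, hae⟩ := Finset.exists_mem_eq_inf' (hA j) u
      obtain ⟨b, hbB, hbe⟩ := Finset.exists_mem_eq_sup' (hB j) u
      have h1 : M j - (A j).inf' (hA j) u ≤
          Finset.univ.sup' Finset.univ_nonempty fun i => v j i - z i := by
        have := Finset.le_sup' (fun i => v j i - z i) (Finset.mem_univ a)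
        have hca : c j a = M j := (hAmem j a).1 haA
        have : v j a - z a = c j a - u a := by simp [hc, hu]
        rw [hae]
        calc M j - u a = c j a - u a := by rw [hca]
          _ = v j a - z a := by simp [hc, hu]
          _ ≤ _ := Finset.le_sup' (fun i => v j i - z i) (Finset.mem_univ a)
      have h2 : (Finset.univ.inf' Finset.univ_nonempty fun i => v j i - z i) ≤
          mm j - (B j).sup' (hB j) u := by
        have hcb : c j b = mm j := (hBmem j b).1 hbB
        rw [hbe]
        calc (Finset.univ.inf' Finset.univ_nonempty fun i => v j i - z i)
            ≤ v j b - z b := Finset.inf'_le (fun i => v j i - z i) (Finset.mem_univ b)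
          _ = c j b - u b := by simp [hc, hu]
          _ = mm j - u b := by rw [hcb]
      have : dtr q z (v j) = (Finset.univ.sup' Finset.univ_nonempty fun i => v j i - z i) -
          (Finset.univ.inf' Finset.univ_nonempty fun i => v j i - z i) := rfl
      rw [this]; linarith
    have hsum : (∑ j, dtr q w (v j)) + (∑ j, ((B j).sup' (hB j) u - (A j).inf' (hA j) u))
        ≤ ∑ j, dtr q z (v j) := by
      rw [← Finset.sum_add_distrib]
      apply Finset.sum_le_sum fun j _ => ?_
      rw [hFw j]
      have := hterm j; linarith
    linarith
  obtain ⟨I, hI⟩ := comb A B hA hB (Finset.image u Finset.univ).card u le_rfl ha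
  -- integer count
  set SInt : ℤ := ∑ j, (((if ((B j) ∩ I).Nonempty then 1 else 0) : ℤ) -
    (if A j ⊆ I then 1 else 0)) with hSInt
  have hcast : ((SInt : ℤ) : ℝ) = ∑ j, (((if ((B j) ∩ I).Nonempty then 1 else 0) : ℝ) -
      (if A j ⊆ I then 1 else 0)) := by
    rw [hSInt]
    push_cast
    apply Finset.sum_congr rfl fun j _ => ?_
    split_ifs <;> simp
  have hSneg : (SInt : ℝ) ≤ -1 := by
    have h1 : SInt < 0 := by
      have := hI; rw [← hcast] at this; exact_mod_cast this
    have h2 : SInt ≤ -1 := by omega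
    exact_mod_cast h2
  -- step (b): thresholds
  set tA : Fin n → ℝ := fun j =>
    if h : ((Finset.univ \ I).Nonempty ∧ A j ⊆ I) then
      (Finset.univ \ I).inf' h.1 (fun i => M j - c j i) else 1 with htA
  set tB : Fin n → ℝ := fun j =>
    if h : (I.Nonempty ∧ (B j ∩ I) = ∅) then
      I.inf' h.1 (fun i => c j i - mm j) else 1 with htB
  have htApos : ∀ j, 0 < tA j := by
    intro j
    rw [htA]
    by_cases h : ((Finset.univ \ I).Nonempty ∧ A j ⊆ I)
    · simp only [dif_pos h]
      apply (Finset.lt_inf'_iff h.1).mpr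
      intro i hi
      rw [Finset.mem_sdiff] at hi
      have hiA : i ∉ A j := fun hiA => hi.2 (h.2 hiA)
      have : c j i ≠ M j := fun he => hiA ((hAmem j i).2 he)
      have := lt_of_le_of_ne (hcM j i) this
      linarith
    · simp only [dif_neg h]; norm_num
  have htBpos : ∀ j, 0 < tB j := by
    intro j
    rw [htB]
    by_cases h : (I.Nonempty ∧ (B j ∩ I) = ∅)
    · simp only [dif_pos h]
      apply (Finset.lt_inf'_iff h.1).mpr
      intro i hi
      have hiB : i ∉ B j := by
        intro hiB
        have : i ∈ B j ∩ I := Finset.mem_inter.mpr ⟨hiB, hi⟩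
        rw [h.2] at this
        exact absurd this (Finset.notMem_empty i)
      have : c j i ≠ mm j := fun he => hiB ((hBmem j i).2 he)
      have := lt_of_le_of_ne (hcm j i) (Ne.symm this)
      linarith
    · simp only [dif_neg h]; norm_num
  set t : ℝ := Finset.univ.inf' Finset.univ_nonempty (fun j => min (tA j) (tB j)) with ht
  have htpos : 0 < t := by
    rw [ht]
    apply (Finset.lt_inf'_iff _).mpr
    intro j _
    exact lt_min (htApos j) (htBpos j)
  have htle : ∀ j, t ≤ tA j ∧ t ≤ tB j := by
    intro j
    have := Finset.inf'_le (fun j => min (tA j) (tB j)) (Finset.mem_univ j)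
    rw [← ht] at this
    exact ⟨le_trans this (min_le_left _ _), le_trans this (min_le_right _ _)⟩
  refine ⟨I, t, htpos, ?_⟩
  -- per-j bounds
  have hsupb : ∀ j, (Finset.univ.sup' Finset.univ_nonempty
      fun i => v j i - (w i + t * (if i ∈ I then 1 else 0)))
      ≤ M j - t * (if A j ⊆ I then 1 else 0) := by
    intro j
    apply Finset.sup'_le _ _ fun i _ => ?_
    have hvi : v j i - (w i + t * (if i ∈ I then 1 else 0))
        = c j i - t * (if i ∈ I then 1 else 0) := by simp [hc]; ring
    rw [hvi]
    by_cases hAI : A j ⊆ I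
    · rw [if_pos hAI]
      by_cases hiI : i ∈ I
      · rw [if_pos hiI]
        have := hcM j i; linarith
      · rw [if_neg hiI, mul_zero, sub_zero]
        have hne : (Finset.univ \ I).Nonempty := ⟨i, Finset.mem_sdiff.mpr ⟨Finset.mem_univ i, hiI⟩⟩
        have h1 : t ≤ tA j := (htle j).1
        have h2 : tA j ≤ M j - c j i := by
          rw [htA]
          simp only [dif_pos (And.intro hne hAI)]
          exact Finset.inf'_le _ (Finset.mem_sdiff.mpr ⟨Finset.mem_univ i, hiI⟩)
        linarith
    · rw [if_neg hAI, mul_zero, sub_zero]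
      have := hcM j i
      have : 0 ≤ t * (if i ∈ I then 1 else 0) := by
        apply mul_nonneg (le_of_lt htpos); split_ifs <;> norm_num
      have := hcM j i
      linarith
  have hinfb : ∀ j, mm j - t * (if ((B j) ∩ I).Nonempty then 1 else 0)
      ≤ (Finset.univ.inf' Finset.univ_nonempty
        fun i => v j i - (w i + t * (if i ∈ I then 1 else 0))) := by
    intro j
    apply Finset.le_inf' _ _ fun i _ => ?_
    have hvi : v j i - (w i + t * (if i ∈ I then 1 else 0))
        = c j i - t * (if i ∈ I then 1 else 0) := by simp [hc]; ring
    rw [hvi]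
    by_cases hBI : ((B j) ∩ I).Nonempty
    · rw [if_pos hBI]
      have h1 : t * (if i ∈ I then 1 else 0) ≤ t := by
        rcases le_or_gt (t * (if i ∈ I then 1 else 0)) t with h | h
        · exact h
        · split_ifs at h <;> simp at h <;> linarith
      have := hcm j i; linarith
    · rw [if_neg hBI, mul_zero, sub_zero]
      by_cases hiI : i ∈ I
      · rw [if_pos hiI, mul_one]
        have hIne : I.Nonempty := ⟨i, hiI⟩
        have hBIe : (B j ∩ I) = ∅ := Finset.not_nonempty_iff_eq_empty.mp hBI
        have h1 : t ≤ tB j := (htle j).2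
        have h2 : tB j ≤ c j i - mm j := by
          rw [htB]
          simp only [dif_pos (And.intro hIne hBIe)]
          exact Finset.inf'_le _ hiI
        linarith
      · rw [if_neg hiI, mul_zero, sub_zero]
        exact hcm j i
  -- assemble
  have hterm : ∀ j, dtr q (fun i => w i + t * (if i ∈ I then 1 else 0)) (v j)
      ≤ (M j - mm j) + t * ((((if ((B j) ∩ I).Nonempty then 1 else 0) : ℝ) -
        (if A j ⊆ I then 1 else 0))) := by
    intro j
    have h1 := hsupb j
    have h2 := hinfb j
    have : dtr q (fun i => w i + t * (if i ∈ I then 1 else 0)) (v j)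
        = (Finset.univ.sup' Finset.univ_nonempty
            fun i => v j i - (w i + t * (if i ∈ I then 1 else 0))) -
          (Finset.univ.inf' Finset.univ_nonempty
            fun i => v j i - (w i + t * (if i ∈ I then 1 else 0))) := rfl
    rw [this]
    linarith
  calc (∑ j, dtr q (fun i => w i + t * (if i ∈ I then 1 else 0)) (v j))
      ≤ ∑ j, ((M j - mm j) + t * ((((if ((B j) ∩ I).Nonempty then 1 else 0) : ℝ) -
          (if A j ⊆ I then 1 else 0)))) := Finset.sum_le_sum fun j _ => hterm j
    _ = (∑ j, (M j - mm j)) + t * (SInt : ℝ) := by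
        rw [Finset.sum_add_distrib, hcast, Finset.mul_sum]
    _ ≤ (∑ j, (M j - mm j)) - t := by nlinarith
    _ = (∑ j, dtr q w (v j)) - t := by
        have : (∑ j, (M j - mm j)) = ∑ j, dtr q w (v j) :=
          Finset.sum_congr rfl fun j _ => (hFw j).symm
        rw [this]

lemma dtr_continuous_fst {q : ℕ} [NeZero q] (y : Fin q → ℝ) :
    Continuous fun x : Fin q → ℝ => dtr q x y := by
  unfold dtr
  apply Continuous.sub
  · exact my_continuous_sup' _ _ _ fun i => (continuous_const.sub (continuous_apply i))
  · exact my_continuous_inf' _ _ _ fun i => (continuous_const.sub (continuous_apply i))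

lemma dtr_continuous_snd {q : ℕ} [NeZero q] (x : Fin q → ℝ) :
    Continuous fun y : Fin q → ℝ => dtr q x y := by
  unfold dtr
  apply Continuous.sub
  · exact my_continuous_sup' _ _ _ fun i => ((continuous_apply i).sub continuous_const)
  · exact my_continuous_inf' _ _ _ fun i => ((continuous_apply i).sub continuous_const)

lemma exists_phi_min {q n : ℕ} [NeZero q] (v : Fin n → Fin q → ℝ) (x : Fin q → ℝ)
    (lam : ℝ) (hlam : 0 < lam) :
    ∃ w : Fin q → ℝ, ∀ y : Fin q → ℝ,
      (∑ j, dtr q w (v j)) + lam * dtr q x w ≤ (∑ j, dtr q y (v j)) + lam * dtr q x y := by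
  classical
  set φ : (Fin q → ℝ) → ℝ := fun y => (∑ j, dtr q y (v j)) + lam * dtr q x y with hφ
  have hφcont : Continuous φ := by
    apply Continuous.add
    · exact continuous_finset_sum _ fun j _ => dtr_continuous_fst (v j)
    · exact continuous_const.mul (dtr_continuous_snd x)
  have hFnn : ∀ y, 0 ≤ ∑ j, dtr q y (v j) :=
    fun y => Finset.sum_nonneg fun j _ => dtr_nonneg _ _
  set C : ℝ := φ x / lam with hC
  have hφx : φ x = ∑ j, dtr q x (v j) := by rw [hφ]; simp [dtr_self x]
  have hCnn : 0 ≤ C := div_nonneg (by rw [hφx]; exact hFnn x) (le_of_lt hlam)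
  set K : Set (Fin q → ℝ) := Set.univ.pi (fun i => Set.Icc (x i - C) (x i + C)) with hK
  have hKc : IsCompact K := isCompact_univ_pi fun i => isCompact_Icc
  have hxK : x ∈ K := by
    rw [hK, Set.mem_univ_pi]
    intro i
    constructor <;> simp <;> linarith
  obtain ⟨w, hwK, hwmin⟩ := hKc.exists_isMinOn ⟨x, hxK⟩ hφcont.continuousOn
  refine ⟨w, fun y => ?_⟩
  set i0 : Fin q := Classical.arbitrary (Fin q) with hi0
  set y' : Fin q → ℝ := fun i => y i + (x i0 - y i0) with hy'
  have hφy' : φ y' = φ y := by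
    rw [hφ]
    simp only
    congr 1
    · exact Finset.sum_congr rfl fun j _ => dtr_shift_fst y (v j) (x i0 - y i0)
    · rw [dtr_shift_snd]
  have hy'i0 : y' i0 = x i0 := by rw [hy']; ring
  rcases le_or_gt (φ y') (φ x) with hyx | hyx
  · have hdtr : dtr q x y' ≤ C := by
      have h1 : lam * dtr q x y' ≤ φ y' := by
        have := hFnn y'
        rw [hφ]; simp only; linarith
      rw [hC]
      rw [le_div_iff₀ hlam]
      linarith [mul_comm lam (dtr q x y'), mul_comm (dtr q x y') lam]
    have hy'K : y' ∈ K := by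
      rw [hK, Set.mem_univ_pi]
      intro i
      have h1 := dtr_coord x y' i i0
      have h2 := dtr_coord x y' i0 i
      rw [hy'i0] at h1 h2
      simp only [sub_self] at h1 h2
      rw [Set.mem_Icc]
      constructor
      · linarith
      · linarith
    have := isMinOn_iff.mp hwmin y' hy'K
    rw [hφy'] at this
    show φ w ≤ φ y
    exact this
  · have h1 := isMinOn_iff.mp hwmin x hxK
    show φ w ≤ φ y
    rw [← hφy']
    linarith

theorem stmt11 (q n : ℕ) [NeZero q] (hn : 0 < n) (v : Fin n → Fin q → ℝ)
    (hFW : (FW q n v).Nonempty) :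
    ∀ x : Fin q → ℝ, ∀ y₀ ∈ FW q n v,
      (1 / (n : ℝ)) * sInf ((fun y => dtr q x y) '' FW q n v) ≤
        fwFun q n v x - fwFun q n v y₀ := by
  intro x y₀ hy₀
  classical
  have hnR : (0:ℝ) < n := Nat.cast_pos.mpr hn
  set F : (Fin q → ℝ) → ℝ := fun y => ∑ j, dtr q y (v j) with hF
  have hfw : ∀ y, fwFun q n v y = (1 / (n:ℝ)) * F y := fun y => rfl
  have hFWiff : ∀ y : Fin q → ℝ, y ∈ FW q n v ↔ ∀ z, F y ≤ F z := by
    intro y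
    constructor
    · intro hy z
      have := hy z
      rw [hfw, hfw] at this
      exact le_of_mul_le_mul_left (by linarith [this]) (by positivity : (0:ℝ) < 1/(n:ℝ))
    · intro hy z
      rw [hfw, hfw]
      apply mul_le_mul_of_nonneg_left (hy z) (by positivity)
  have hy₀' : ∀ z, F y₀ ≤ F z := (hFWiff y₀).1 hy₀
  set S : Set ℝ := (fun y => dtr q x y) '' FW q n v with hS
  have hSbdd : BddBelow S := ⟨0, fun s hs => by
    obtain ⟨y, _, rfl⟩ := hs
    exact dtr_nonneg x y⟩
  have hSnn : 0 ≤ sInf S := by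
    apply le_csInf
    · exact hFW.image _
    · intro s hs
      obtain ⟨y, _, rfl⟩ := hs
      exact dtr_nonneg x y
  -- key step for each lam ∈ (0,1)
  have key : ∀ lam : ℝ, 0 < lam → lam < 1 → lam * sInf S ≤ F x - F y₀ := by
    intro lam hl0 hl1
    obtain ⟨w, hw⟩ := exists_phi_min v x lam hl0
    have hwFW : w ∈ FW q n v := by
      rw [hFWiff]
      by_contra hcon
      push_neg at hcon
      obtain ⟨z, hz⟩ := hcon
      obtain ⟨I, t, htpos, hdesc⟩ := descent hn v w z hz
      set w' : Fin q → ℝ := fun i => w i + t * (if i ∈ I then 1 else 0) with hw'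
      have h1 : dtr q x w' ≤ dtr q x w + t :=
        le_trans (dtr_triangle x w w') (by
          have := dtr_ind_le w t (le_of_lt htpos) I
          linarith)
      have h2 := hw w'
      have h3 : lam * dtr q x w' ≤ lam * (dtr q x w + t) :=
        mul_le_mul_of_nonneg_left h1 (le_of_lt hl0)
      have h4 : lam * t < t := by nlinarith
      rw [hF] at *
      nlinarith
    have hFweq : F w = F y₀ := le_antisymm (((hFWiff w).1 hwFW) y₀) (hy₀' w)
    have hsinf : sInf S ≤ dtr q x w := csInf_le hSbdd ⟨w, hwFW, rfl⟩
    have h5 := hw x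
    rw [dtr_self x] at h5
    have h6 : lam * sInf S ≤ lam * dtr q x w :=
      mul_le_mul_of_nonneg_left hsinf (le_of_lt hl0)
    rw [hF] at *
    nlinarith
  have hB : 0 ≤ F x - F y₀ := by linarith [hy₀' x]
  have hfinal : sInf S ≤ F x - F y₀ := by
    by_contra hcon
    push_neg at hcon
    have hSpos : 0 < sInf S := lt_of_le_of_lt hB hcon
    obtain ⟨lam, hlam1, hlam2⟩ := exists_between ((div_lt_one hSpos).mpr hcon)
    have hlam0 : 0 < lam := lt_of_le_of_lt (div_nonneg hB (le_of_lt hSpos)) hlam1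
    have := key lam hlam0 hlam2
    rw [div_lt_iff₀ hSpos] at hlam1
    nlinarith
  rw [hfw, hfw, ← mul_sub]
  exact mul_le_mul_of_nonneg_left hfinal (by positivity)
end

section
/- Let y be a Fermat-Weber point of v_1, ..., v_n ∈ R^q (a minimizer of f(x) = (1/n)Σ_j d_tr(x, v_j)) that is a closest Fermat-Weber point to some x ∉ FW with respect to d_tr. For 1 ≤ i, let U_i ⊆ [q] be the union of the argmax sets of the i largest distinct values of x − y, and let u_i = 1_{U_i} be its indicator vector, where U_i is a proper nonempty subset of [q]. Then the one-sided directional derivative of f at y in direction u_i, namely lim_{t→0+} (f(y + t·u_i) − f(y))/t, is at least 1/n. -/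
open Filter Topology

section Aux
variable (q : ℕ) [NeZero q]

/-- `D w = sup w - inf w`. -/
noncomputable def Dfn (w : Fin q → ℝ) : ℝ :=
  (Finset.univ.sup' Finset.univ_nonempty w) - (Finset.univ.inf' Finset.univ_nonempty w)

lemma sup'_neg_eq (w : Fin q → ℝ) :
    Finset.univ.sup' Finset.univ_nonempty (fun i => -(w i))
      = - Finset.univ.inf' Finset.univ_nonempty w := by
  apply le_antisymm
  · apply Finset.sup'_le
    intro i _
    exact neg_le_neg (Finset.inf'_le w (Finset.mem_univ i))
  · obtain ⟨i, -, hi⟩ := Finset.exists_mem_eq_inf' (Finset.univ_nonempty) w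
    rw [hi]
    exact Finset.le_sup' (fun i => -(w i)) (Finset.mem_univ i)

lemma inf'_neg_eq (w : Fin q → ℝ) :
    Finset.univ.inf' Finset.univ_nonempty (fun i => -(w i))
      = - Finset.univ.sup' Finset.univ_nonempty w := by
  have := sup'_neg_eq q (fun i => -(w i))
  simp only [neg_neg] at this
  linarith

lemma Dfn_neg (w : Fin q → ℝ) : Dfn q (fun i => -(w i)) = Dfn q w := by
  unfold Dfn
  rw [sup'_neg_eq, inf'_neg_eq]
  ring

/-- sup: no argmax moves — slope 0 on a small interval. -/
lemma sup_pert_zero (a u : Fin q → ℝ) (hu : ∀ i, u i = 0 ∨ u i = 1)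
    (h : ∀ i, a i = Finset.univ.sup' Finset.univ_nonempty a → u i = 0) :
    ∃ δ > (0:ℝ), ∀ t : ℝ, 0 ≤ t → t ≤ δ →
      Finset.univ.sup' Finset.univ_nonempty (fun i => a i + t * u i)
        = Finset.univ.sup' Finset.univ_nonempty a := by
  set M := Finset.univ.sup' Finset.univ_nonempty a with hM
  refine ⟨Finset.univ.inf' Finset.univ_nonempty (fun i => if u i = 1 then M - a i else 1),
    ?_, ?_⟩
  · rw [gt_iff_lt, Finset.lt_inf'_iff]
    intro i _
    split_ifs with h1
    · have hle : a i ≤ M := Finset.le_sup' a (Finset.mem_univ i)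
      have hne : a i ≠ M := fun he => by simp [h i he] at h1
      have := lt_of_le_of_ne hle hne
      linarith
    · norm_num
  · intro t ht0 htδ
    apply le_antisymm
    · apply Finset.sup'_le
      intro i _
      rcases hu i with h0 | h1
      · rw [h0, mul_zero, add_zero]
        exact Finset.le_sup' a (Finset.mem_univ i)
      · rw [h1, mul_one]
        have hδ := Finset.inf'_le (f := fun i => if u i = 1 then M - a i else 1)
          (Finset.mem_univ i)
        rw [if_pos h1] at hδ
        linarith
    · obtain ⟨i, -, hi⟩ := Finset.exists_mem_eq_sup' (Finset.univ_nonempty) a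
      have hui : u i = 0 := h i hi.symm
      have : M = a i + t * u i := by rw [hui, mul_zero, add_zero]; exact hi
      rw [this]
      exact Finset.le_sup' (fun i => a i + t * u i) (Finset.mem_univ i)

/-- sup: some argmax moves — slope 1 for all `t ≥ 0`. -/
lemma sup_pert_one (a u : Fin q → ℝ) (hu : ∀ i, u i = 0 ∨ u i = 1)
    (i₀ : Fin q) (hi₀ : a i₀ = Finset.univ.sup' Finset.univ_nonempty a) (hu₀ : u i₀ = 1) :
    ∀ t : ℝ, 0 ≤ t →
      Finset.univ.sup' Finset.univ_nonempty (fun i => a i + t * u i)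
        = Finset.univ.sup' Finset.univ_nonempty a + t := by
  intro t ht0
  apply le_antisymm
  · apply Finset.sup'_le
    intro i _
    have h1 : a i ≤ Finset.univ.sup' Finset.univ_nonempty a :=
      Finset.le_sup' a (Finset.mem_univ i)
    have h2 : t * u i ≤ t := by
      rcases hu i with h0 | h0 <;> rw [h0] <;> nlinarith
    linarith
  · have : Finset.univ.sup' Finset.univ_nonempty a + t = a i₀ + t * u i₀ := by
      rw [hu₀, mul_one, hi₀]
    rw [this]
    exact Finset.le_sup' (fun i => a i + t * u i) (Finset.mem_univ i₀)

/-- inf: all argmins move — slope 1 on a small interval. -/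
lemma inf_pert_one (a u : Fin q → ℝ) (hu : ∀ i, u i = 0 ∨ u i = 1)
    (h : ∀ i, a i = Finset.univ.inf' Finset.univ_nonempty a → u i = 1) :
    ∃ δ > (0:ℝ), ∀ t : ℝ, 0 ≤ t → t ≤ δ →
      Finset.univ.inf' Finset.univ_nonempty (fun i => a i + t * u i)
        = Finset.univ.inf' Finset.univ_nonempty a + t := by
  set m := Finset.univ.inf' Finset.univ_nonempty a with hm
  refine ⟨Finset.univ.inf' Finset.univ_nonempty (fun i => if u i = 0 then a i - m else 1),
    ?_, ?_⟩
  · rw [gt_iff_lt, Finset.lt_inf'_iff]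
    intro i _
    split_ifs with h1
    · have hle : m ≤ a i := Finset.inf'_le a (Finset.mem_univ i)
      have hne : a i ≠ m := fun he => by simp [h i he] at h1
      have := lt_of_le_of_ne hle (Ne.symm hne)
      linarith
    · norm_num
  · intro t ht0 htδ
    apply le_antisymm
    · obtain ⟨i, -, hi⟩ := Finset.exists_mem_eq_inf' (Finset.univ_nonempty) a
      have hui : u i = 1 := h i hi.symm
      have : m + t = a i + t * u i := by rw [hui, mul_one, hm, hi]
      rw [this]
      exact Finset.inf'_le (fun i => a i + t * u i) (Finset.mem_univ i)
    · apply Finset.le_inf'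
      intro i _
      rcases hu i with h0 | h1
      · rw [h0, mul_zero, add_zero]
        have hδ := Finset.inf'_le (f := fun i => if u i = 0 then a i - m else 1)
          (Finset.mem_univ i)
        rw [if_pos h0] at hδ
        linarith
      · rw [h1, mul_one]
        have : m ≤ a i := Finset.inf'_le a (Finset.mem_univ i)
        linarith

/-- inf: some argmin stays — slope 0 for all `t ≥ 0`. -/
lemma inf_pert_zero (a u : Fin q → ℝ) (hu : ∀ i, u i = 0 ∨ u i = 1)
    (i₀ : Fin q) (hi₀ : a i₀ = Finset.univ.inf' Finset.univ_nonempty a) (hu₀ : u i₀ = 0) :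
    ∀ t : ℝ, 0 ≤ t →
      Finset.univ.inf' Finset.univ_nonempty (fun i => a i + t * u i)
        = Finset.univ.inf' Finset.univ_nonempty a := by
  intro t ht0
  apply le_antisymm
  · have : a i₀ + t * u i₀ = Finset.univ.inf' Finset.univ_nonempty a := by
      rw [hu₀, mul_zero, add_zero, hi₀]
    rw [← this]
    exact Finset.inf'_le (fun i => a i + t * u i) (Finset.mem_univ i₀)
  · apply Finset.le_inf'
    intro i _
    have h1 : Finset.univ.inf' Finset.univ_nonempty a ≤ a i :=
      Finset.inf'_le a (Finset.mem_univ i)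
    have h2 : 0 ≤ t * u i := by
      rcases hu i with h0 | h0 <;> rw [h0] <;> nlinarith
    linarith

/-- `D (a + t u)` is affine with integer slope for small `t ≥ 0`. -/
lemma Dfn_pert (a u : Fin q → ℝ) (hu : ∀ i, u i = 0 ∨ u i = 1) :
    ∃ δ > (0:ℝ), ∃ s : ℤ, ∀ t : ℝ, 0 ≤ t → t ≤ δ →
      Dfn q (fun i => a i + t * u i) = Dfn q a + (s : ℝ) * t := by
  have hsup : ∃ δ > (0:ℝ), ∃ sM : ℤ, ∀ t : ℝ, 0 ≤ t → t ≤ δ →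
      Finset.univ.sup' Finset.univ_nonempty (fun i => a i + t * u i)
        = Finset.univ.sup' Finset.univ_nonempty a + (sM : ℝ) * t := by
    by_cases h : ∃ i₀, a i₀ = Finset.univ.sup' Finset.univ_nonempty a ∧ u i₀ = 1
    · obtain ⟨i₀, hi₀, hu₀⟩ := h
      exact ⟨1, one_pos, 1, fun t ht0 _ => by
        rw [sup_pert_one q a u hu i₀ hi₀ hu₀ t ht0]; push_cast; ring⟩
    · push_neg at h
      have h' : ∀ i, a i = Finset.univ.sup' Finset.univ_nonempty a → u i = 0 := by
        intro i hi
        rcases hu i with h0 | h1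
        · exact h0
        · exact absurd h1 (h i hi)
      obtain ⟨δ, hδpos, hδ⟩ := sup_pert_zero q a u hu h'
      exact ⟨δ, hδpos, 0, fun t ht0 htδ => by rw [hδ t ht0 htδ]; push_cast; ring⟩
  have hinf : ∃ δ > (0:ℝ), ∃ sm : ℤ, ∀ t : ℝ, 0 ≤ t → t ≤ δ →
      Finset.univ.inf' Finset.univ_nonempty (fun i => a i + t * u i)
        = Finset.univ.inf' Finset.univ_nonempty a + (sm : ℝ) * t := by
    by_cases h : ∃ i₀, a i₀ = Finset.univ.inf' Finset.univ_nonempty a ∧ u i₀ = 0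
    · obtain ⟨i₀, hi₀, hu₀⟩ := h
      exact ⟨1, one_pos, 0, fun t ht0 _ => by
        rw [inf_pert_zero q a u hu i₀ hi₀ hu₀ t ht0]; push_cast; ring⟩
    · push_neg at h
      have h' : ∀ i, a i = Finset.univ.inf' Finset.univ_nonempty a → u i = 1 := by
        intro i hi
        rcases hu i with h0 | h1
        · exact absurd h0 (h i hi)
        · exact h1
      obtain ⟨δ, hδpos, hδ⟩ := inf_pert_one q a u hu h'
      exact ⟨δ, hδpos, 1, fun t ht0 htδ => by rw [hδ t ht0 htδ]; push_cast; ring⟩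
  obtain ⟨δ1, hδ1, sM, hM⟩ := hsup
  obtain ⟨δ2, hδ2, sm, hm⟩ := hinf
  refine ⟨min δ1 δ2, lt_min hδ1 hδ2, sM - sm, fun t ht0 htδ => ?_⟩
  unfold Dfn
  rw [hM t ht0 (le_trans htδ (min_le_left _ _)), hm t ht0 (le_trans htδ (min_le_right _ _))]
  push_cast
  ring

end Aux

theorem stmt12 (q n : ℕ) [NeZero q] (hn : 0 < n) (v : Fin n → Fin q → ℝ)
    (x y : Fin q → ℝ)
    (hy : y ∈ FW q n v) (hx : x ∉ FW q n v)
    -- `y` is a closest Fermat-Weber point to `x`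
    (hclosest : ∀ z ∈ FW q n v, dtr q x y ≤ dtr q x z)
    -- `U` is the union of the argmax sets of the `i` largest distinct values of `x - y`,
    -- i.e. a nonempty proper upper level set of `x - y`
    (U : Set (Fin q)) (hU : ∃ c : ℝ, U = {a : Fin q | c ≤ x a - y a})
    (hUne : U.Nonempty) (hUproper : U ≠ Set.univ) :
    ∃ L : ℝ, (1 / (n : ℝ)) ≤ L ∧
      Tendsto (fun t : ℝ =>
          (fwFun q n v (y + t • U.indicator (fun _ => (1 : ℝ))) - fwFun q n v y) / t)
        (𝓝[>] 0) (𝓝 L) := by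
  classical
  obtain ⟨c, hc⟩ := hU
  set u : Fin q → ℝ := U.indicator (fun _ => 1) with hu_def
  have humem : ∀ i, i ∈ U → u i = 1 := fun i h => by
    simp [hu_def, Set.indicator_of_mem h]
  have hunot : ∀ i, i ∉ U → u i = 0 := fun i h => by
    simp [hu_def, Set.indicator_of_notMem h]
  have hu : ∀ i, u i = 0 ∨ u i = 1 := by
    intro i
    by_cases h : i ∈ U
    · exact Or.inr (humem i h)
    · exact Or.inl (hunot i h)
  have dtr_eq : ∀ X Z : Fin q → ℝ, dtr q X Z = Dfn q (fun i => Z i - X i) := fun _ _ => rfl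
  -- the x-direction hypotheses
  obtain ⟨i₀, hi₀U⟩ := (Set.ne_univ_iff_exists_notMem U).mp hUproper
  have hi₀c : x i₀ - y i₀ < c := by
    by_contra h
    exact hi₀U (by rw [hc]; exact not_lt.mp h)
  have h_supzero : ∀ i, (fun i => y i - x i) i =
      Finset.univ.sup' Finset.univ_nonempty (fun i => y i - x i) → u i = 0 := by
    intro i hi
    have h1 := Finset.le_sup' (fun i => y i - x i) (Finset.mem_univ i₀)
    rw [← hi] at h1
    simp only at h1
    apply hunot
    rw [hc]
    simp only [Set.mem_setOf_eq, not_le]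
    linarith
  obtain ⟨i₁, hi₁U⟩ := hUne
  have hi₁c : c ≤ x i₁ - y i₁ := by rw [hc] at hi₁U; exact hi₁U
  have h_infone : ∀ i, (fun i => y i - x i) i =
      Finset.univ.inf' Finset.univ_nonempty (fun i => y i - x i) → u i = 1 := by
    intro i hi
    have h1 := Finset.inf'_le (fun i => y i - x i) (Finset.mem_univ i₁)
    rw [← hi] at h1
    simp only at h1
    apply humem
    rw [hc]
    simp only [Set.mem_setOf_eq]
    linarith
  obtain ⟨δ1, hδ1, hsupx⟩ := sup_pert_zero q (fun i => y i - x i) u hu h_supzero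
  obtain ⟨δ2, hδ2, hinfx⟩ := inf_pert_one q (fun i => y i - x i) u hu h_infone
  -- per-sample slopes
  have key : ∀ j, ∃ δ > (0:ℝ), ∃ s : ℤ, ∀ t : ℝ, 0 ≤ t → t ≤ δ →
      Dfn q (fun i => (y i - v j i) + t * u i) = Dfn q (fun i => y i - v j i) + (s : ℝ) * t :=
    fun j => Dfn_pert q (fun i => y i - v j i) u hu
  choose δf hδf sf hsf using key
  haveI : NeZero n := ⟨hn.ne'⟩
  have hne : (Finset.univ : Finset (Fin n)).Nonempty := Finset.univ_nonempty
  set δ : ℝ := min (min δ1 δ2) (Finset.univ.inf' hne δf) with hδdef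
  have hδpos : 0 < δ := by
    apply lt_min (lt_min hδ1 hδ2)
    rw [Finset.lt_inf'_iff]
    exact fun j _ => hδf j
  set S : ℤ := ∑ j, sf j with hSdef
  have hScast : (S : ℝ) = ∑ j, ((sf j : ℝ)) := by rw [hSdef]; push_cast; ring
  have hn' : (0:ℝ) < n := by exact_mod_cast hn
  -- distance formula per sample
  have hdist : ∀ j, ∀ t : ℝ, 0 ≤ t → t ≤ δ →
      dtr q (y + t • u) (v j) = dtr q y (v j) + (sf j : ℝ) * t := by
    intro j t ht0 htδ
    have htj : t ≤ δf j :=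
      le_trans htδ (le_trans (min_le_right _ _) (Finset.inf'_le δf (Finset.mem_univ j)))
    have efun : (fun i => v j i - (y + t • u) i) = fun i => -((y i - v j i) + t * u i) := by
      funext i
      simp only [Pi.add_apply, Pi.smul_apply, smul_eq_mul]
      ring
    have efun0 : (fun i => v j i - y i) = fun i => -(y i - v j i) := by
      funext i; ring
    rw [dtr_eq, dtr_eq, efun, efun0, Dfn_neg, Dfn_neg, hsf j t ht0 htj]
  -- the fwFun formula
  have hfw : ∀ t : ℝ, 0 ≤ t → t ≤ δ →
      fwFun q n v (y + t • u) = fwFun q n v y + ((S : ℝ) / n) * t := by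
    intro t ht0 htδ
    unfold fwFun
    have : ∑ j, dtr q (y + t • u) (v j) = ∑ j, (dtr q y (v j) + (sf j : ℝ) * t) :=
      Finset.sum_congr rfl fun j _ => hdist j t ht0 htδ
    rw [this, Finset.sum_add_distrib, ← Finset.sum_mul, ← hScast]
    field_simp
  -- distance to x formula
  have hdx : ∀ t : ℝ, 0 ≤ t → t ≤ δ → dtr q x (y + t • u) = dtr q x y - t := by
    intro t ht0 htδ
    have ht1 : t ≤ δ1 := le_trans htδ (le_trans (min_le_left _ _) (min_le_left _ _))
    have ht2 : t ≤ δ2 := le_trans htδ (le_trans (min_le_left _ _) (min_le_right _ _))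
    have efun : (fun i => (y + t • u) i - x i) = fun i => (y i - x i) + t * u i := by
      funext i
      simp only [Pi.add_apply, Pi.smul_apply, smul_eq_mul]
      ring
    rw [dtr_eq, dtr_eq]
    unfold Dfn
    rw [efun, hsupx t ht0 ht1, hinfx t ht0 ht2]
    ring
  -- strict increase at t = δ
  have hlt : fwFun q n v y < fwFun q n v (y + δ • u) := by
    have hnot : (y + δ • u) ∉ FW q n v := by
      intro hmem
      have h1 := hclosest _ hmem
      have h2 := hdx δ hδpos.le le_rfl
      linarith
    by_contra hle
    push_neg at hle
    exact hnot (fun z => le_trans hle (hy z))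
  have h3 : 0 < ((S:ℝ)/n) := by
    have h4 := hfw δ hδpos.le le_rfl
    by_contra h
    push_neg at h
    nlinarith
  have hS1 : (1:ℝ) ≤ (S:ℝ) := by
    have h5 : (0:ℝ) < (S:ℝ) := by
      have := mul_pos h3 hn'
      rwa [div_mul_cancel₀ _ hn'.ne'] at this
    have : 0 < S := by exact_mod_cast h5
    exact_mod_cast this
  refine ⟨(S:ℝ)/n, ?_, ?_⟩
  · gcongr
  · apply Tendsto.congr' _ tendsto_const_nhds
    filter_upwards [Ioc_mem_nhdsGT_of_mem (Set.left_mem_Ico.mpr hδpos)] with t ht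
    rw [hfw t ht.1.le ht.2, add_sub_cancel_left, mul_div_assoc, div_self ht.1.ne', mul_one]
end

section
/- Let y minimize the Fermat-Weber function f(x) = (1/n)Σ_j d_tr(x, v_j) for v_1, ..., v_n ∈ R^q, suppose y is a closest minimizer to a point x ∉ FW (with D = d_tr(x,y) > 0), and suppose that for each indicator vector u_i of the nested level sets of x − y (as in the tropical line segment decomposition) the directional derivative ∂_{u_i} f(y) is at least 1/n. Then f(x) − f(y) ≥ D/n; that is, (1/n)·d_tr(x, FW) ≤ f(x) − min f. -/
open MeasureTheory

open Filter Topology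

lemma indint (m M b : ℝ) (h1 : m ≤ b) (h2 : b ≤ M) :
    ∫ c in Set.Ioc m M, (if c ≤ b then (1:ℝ) else 0) = b - m := by
  have heq : (fun c => if c ≤ b then (1:ℝ) else 0) = Set.indicator (Set.Iic b) (fun _ => (1:ℝ)) := by
    ext c; simp [Set.indicator_apply]
  rw [heq, MeasureTheory.setIntegral_indicator measurableSet_Iic]
  have : Set.Ioc m M ∩ Set.Iic b = Set.Ioc m b := by
    ext c; simp only [Set.mem_inter_iff, Set.mem_Ioc, Set.mem_Iic]
    constructor
    · rintro ⟨⟨h1,h2⟩,h3⟩; exact ⟨h1, h3⟩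
    · rintro ⟨ha, hb⟩; exact ⟨⟨ha, le_trans hb h2⟩, hb⟩
  rw [this]
  simp [Real.volume_Ioc, ENNReal.toReal_ofReal (by linarith : (0:ℝ) ≤ b - m), h1]

lemma key {n : ℕ} (α β : Fin n → ℝ) (m M : ℝ) (hmM : m ≤ M)
    (hα1 : ∀ j, m ≤ α j) (hα2 : ∀ j, α j ≤ M)
    (hβ1 : ∀ j, m ≤ β j) (hβ2 : ∀ j, β j ≤ M)
    (h : ∀ c, m < c → c ≤ M →
      (1:ℝ) ≤ ∑ j, ((if c ≤ β j then (1:ℝ) else 0) - (if c ≤ α j then (1:ℝ) else 0))) :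
    M - m ≤ ∑ j, (β j - α j) := by
  have hint : ∀ b : ℝ, IntegrableOn (fun c => if c ≤ b then (1:ℝ) else 0) (Set.Ioc m M) := by
    intro b
    have heq : (fun c => if c ≤ b then (1:ℝ) else 0)
        = Set.indicator (Set.Iic b) (fun _ => (1:ℝ)) := by
      ext c; simp [Set.indicator_apply]
    rw [heq]
    exact (integrableOn_const measure_Ioc_lt_top.ne).indicator measurableSet_Iic
  have hintg : IntegrableOn (fun c => ∑ j, ((if c ≤ β j then (1:ℝ) else 0) - (if c ≤ α j then (1:ℝ) else 0))) (Set.Ioc m M) := by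
    apply MeasureTheory.integrable_finset_sum
    intro j _
    exact (hint (β j)).sub (hint (α j))
  have h1 : M - m = ∫ _ in Set.Ioc m M, (1:ℝ) := by
    simp [Real.volume_Ioc, ENNReal.toReal_ofReal (by linarith : (0:ℝ) ≤ M - m), hmM]
  have h2 : (∫ _ in Set.Ioc m M, (1:ℝ)) ≤
      ∫ c in Set.Ioc m M, ∑ j, ((if c ≤ β j then (1:ℝ) else 0) - (if c ≤ α j then (1:ℝ) else 0)) := by
    apply MeasureTheory.setIntegral_mono_on (integrableOn_const measure_Ioc_lt_top.ne) hintg measurableSet_Ioc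
    intro c hc
    exact h c hc.1 hc.2
  have h3 : (∫ c in Set.Ioc m M, ∑ j, ((if c ≤ β j then (1:ℝ) else 0) - (if c ≤ α j then (1:ℝ) else 0)))
      = ∑ j, (β j - α j) := by
    rw [MeasureTheory.integral_finset_sum]
    · apply Finset.sum_congr rfl
      intro j _
      rw [MeasureTheory.integral_sub (hint (β j)) (hint (α j)),
        indint m M (β j) (hβ1 j) (hβ2 j), indint m M (α j) (hα1 j) (hα2 j)]
      ring
    · intro j _
      exact (hint (β j)).sub (hint (α j))
  linarith [h1, h2, h3]

lemma sup'_pert_in {q : ℕ} [NeZero q] (g u : Fin q → ℝ) (t ε : ℝ) (ht : 0 < t) (htε : t < ε)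
    (hu01 : ∀ i, u i = 0 ∨ u i = 1)
    (hgap : ∀ i, g i < Finset.univ.sup' Finset.univ_nonempty g →
      g i + ε ≤ Finset.univ.sup' Finset.univ_nonempty g)
    (hin : ∀ i, g i = Finset.univ.sup' Finset.univ_nonempty g → u i = 1) :
    Finset.univ.sup' Finset.univ_nonempty (fun i => g i - t * u i)
      = Finset.univ.sup' Finset.univ_nonempty g - t := by
  apply le_antisymm
  · apply Finset.sup'_le
    intro i _
    rcases eq_or_lt_of_le (Finset.le_sup' g (Finset.mem_univ i)) with h | h
    · rw [hin i h, h]; linarith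
    · have := hgap i h
      rcases hu01 i with h0 | h1
      · rw [h0]; linarith
      · rw [h1]; linarith
  · obtain ⟨a, -, ha⟩ := Finset.exists_mem_eq_sup' Finset.univ_nonempty g
    have h1 : u a = 1 := hin a ha.symm
    have heq : Finset.univ.sup' Finset.univ_nonempty g - t = g a - t * u a := by
      rw [h1, ← ha]; ring
    rw [heq]
    exact Finset.le_sup' (fun i => g i - t * u i) (Finset.mem_univ a)

lemma sup'_pert_out {q : ℕ} [NeZero q] (g u : Fin q → ℝ) (t : ℝ) (ht : 0 ≤ t)
    (hu01 : ∀ i, u i = 0 ∨ u i = 1)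
    (hout : ∃ a, g a = Finset.univ.sup' Finset.univ_nonempty g ∧ u a = 0) :
    Finset.univ.sup' Finset.univ_nonempty (fun i => g i - t * u i)
      = Finset.univ.sup' Finset.univ_nonempty g := by
  apply le_antisymm
  · apply Finset.sup'_le
    intro i _
    have h1 : 0 ≤ u i := by rcases hu01 i with h | h <;> rw [h] <;> norm_num
    have h2 : 0 ≤ t * u i := mul_nonneg ht h1
    have := Finset.le_sup' g (Finset.mem_univ i)
    linarith
  · obtain ⟨a, ha, ha0⟩ := hout
    have heq : Finset.univ.sup' Finset.univ_nonempty g = g a - t * u a := by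
      rw [ha0, ← ha]; ring
    rw [heq]
    exact Finset.le_sup' (fun i => g i - t * u i) (Finset.mem_univ a)

lemma inf'_pert_in {q : ℕ} [NeZero q] (g u : Fin q → ℝ) (t : ℝ) (ht : 0 ≤ t)
    (hu01 : ∀ i, u i = 0 ∨ u i = 1)
    (hin : ∃ b, g b = Finset.univ.inf' Finset.univ_nonempty g ∧ u b = 1) :
    Finset.univ.inf' Finset.univ_nonempty (fun i => g i - t * u i)
      = Finset.univ.inf' Finset.univ_nonempty g - t := by
  apply le_antisymm
  · obtain ⟨b, hb, hb1⟩ := hin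
    have heq : Finset.univ.inf' Finset.univ_nonempty g - t = g b - t * u b := by
      rw [hb1, ← hb]; ring
    rw [heq]
    exact Finset.inf'_le (fun i => g i - t * u i) (Finset.mem_univ b)
  · apply Finset.le_inf'
    intro i _
    have h1 : u i ≤ 1 := by rcases hu01 i with h | h <;> rw [h] <;> norm_num
    have h2 : t * u i ≤ t := by
      calc t * u i ≤ t * 1 := mul_le_mul_of_nonneg_left h1 ht
      _ = t := mul_one t
    have := Finset.inf'_le g (Finset.mem_univ i)
    linarith

lemma inf'_pert_out {q : ℕ} [NeZero q] (g u : Fin q → ℝ) (t ε : ℝ) (ht : 0 < t) (htε : t < ε)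
    (hu01 : ∀ i, u i = 0 ∨ u i = 1)
    (hgap : ∀ i, Finset.univ.inf' Finset.univ_nonempty g < g i →
      Finset.univ.inf' Finset.univ_nonempty g + ε ≤ g i)
    (hout : ∀ i, g i = Finset.univ.inf' Finset.univ_nonempty g → u i = 0) :
    Finset.univ.inf' Finset.univ_nonempty (fun i => g i - t * u i)
      = Finset.univ.inf' Finset.univ_nonempty g := by
  apply le_antisymm
  · obtain ⟨b, -, hb⟩ := Finset.exists_mem_eq_inf' Finset.univ_nonempty g
    have h0 : u b = 0 := hout b hb.symm
    have heq : Finset.univ.inf' Finset.univ_nonempty g = g b - t * u b := by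
      rw [h0, ← hb]; ring
    rw [heq]
    exact Finset.inf'_le (fun i => g i - t * u i) (Finset.mem_univ b)
  · apply Finset.le_inf'
    intro i _
    rcases eq_or_lt_of_le (Finset.inf'_le g (Finset.mem_univ i)) with h | h
    · rw [hout i h.symm, mul_zero, sub_zero, ← h]
    · have := hgap i h
      rcases hu01 i with h0 | h1
      · rw [h0]; linarith
      · rw [h1]; linarith

theorem stmt15 (q n : ℕ) [NeZero q] (hn : 0 < n) (v : Fin n → Fin q → ℝ)
    (x y : Fin q → ℝ)
    (hy : y ∈ FW q n v) (hx : x ∉ FW q n v)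
    -- `y` is a closest Fermat-Weber point to `x`
    (hclosest : ∀ z ∈ FW q n v, dtr q x y ≤ dtr q x z)
    (hD : 0 < dtr q x y)
    -- for each indicator vector `u_i` of the nested level sets of `x − y`,
    -- the one-sided directional derivative of `f` at `y` is at least `1/n`
    (hderiv : ∀ U : Set (Fin q), (∃ c : ℝ, U = {a : Fin q | c ≤ x a - y a}) →
      U.Nonempty → U ≠ Set.univ →
      ∃ L : ℝ, (1 / (n : ℝ)) ≤ L ∧
        Tendsto (fun t : ℝ =>
            (fwFun q n v (y + t • U.indicator (fun _ => (1 : ℝ))) - fwFun q n v y) / t)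
          (𝓝[>] 0) (𝓝 L)) :
    dtr q x y / n ≤ fwFun q n v x - fwFun q n v y := by
  classical
  have hnpos : (0:ℝ) < n := by exact_mod_cast hn
  obtain ⟨w, hw⟩ : ∃ w : Fin q → ℝ, ∀ i, w i = x i - y i := ⟨_, fun i => rfl⟩
  obtain ⟨ml, hml⟩ : ∃ r : ℝ, r = Finset.univ.inf' Finset.univ_nonempty w := ⟨_, rfl⟩
  obtain ⟨Mu, hMu⟩ : ∃ r : ℝ, r = Finset.univ.sup' Finset.univ_nonempty w := ⟨_, rfl⟩
  have hwm : ∀ i, ml ≤ w i := fun i => hml ▸ Finset.inf'_le w (Finset.mem_univ i)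
  have hwM : ∀ i, w i ≤ Mu := fun i => hMu ▸ Finset.le_sup' w (Finset.mem_univ i)
  have hmM : ml ≤ Mu := by
    obtain ⟨i, -⟩ := Finset.univ_nonempty (α := Fin q)
    exact le_trans (hwm i) (hwM i)
  obtain ⟨Sj, hSj⟩ : ∃ S : Fin n → ℝ, ∀ j,
      S j = Finset.univ.sup' Finset.univ_nonempty (fun i => v j i - y i) := ⟨_, fun j => rfl⟩
  obtain ⟨Ij, hIj⟩ : ∃ S : Fin n → ℝ, ∀ j,
      S j = Finset.univ.inf' Finset.univ_nonempty (fun i => v j i - y i) := ⟨_, fun j => rfl⟩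
  have hAmaxne : ∀ j, (Finset.univ.filter (fun i => v j i - y i = Sj j)).Nonempty := by
    intro j
    obtain ⟨a, -, ha⟩ := Finset.exists_mem_eq_sup' Finset.univ_nonempty (fun i => v j i - y i)
    exact ⟨a, Finset.mem_filter.2 ⟨Finset.mem_univ a, by rw [hSj]; exact ha.symm⟩⟩
  have hAminne : ∀ j, (Finset.univ.filter (fun i => v j i - y i = Ij j)).Nonempty := by
    intro j
    obtain ⟨a, -, ha⟩ := Finset.exists_mem_eq_inf' Finset.univ_nonempty (fun i => v j i - y i)
    exact ⟨a, Finset.mem_filter.2 ⟨Finset.mem_univ a, by rw [hIj]; exact ha.symm⟩⟩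
  obtain ⟨al, hal⟩ : ∃ a : Fin n → ℝ, ∀ j,
      a j = (Finset.univ.filter (fun i => v j i - y i = Sj j)).inf' (hAmaxne j) w := ⟨_, fun j => rfl⟩
  obtain ⟨be, hbe⟩ : ∃ a : Fin n → ℝ, ∀ j,
      a j = (Finset.univ.filter (fun i => v j i - y i = Ij j)).sup' (hAminne j) w := ⟨_, fun j => rfl⟩
  -- basic bounds on al, be
  have halm : ∀ j, ml ≤ al j ∧ al j ≤ Mu := by
    intro j
    obtain ⟨a, hamem, ha⟩ := Finset.exists_mem_eq_inf' (hAmaxne j) w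
    rw [hal, ha]
    exact ⟨hwm a, hwM a⟩
  have hbem : ∀ j, ml ≤ be j ∧ be j ≤ Mu := by
    intro j
    obtain ⟨a, hamem, ha⟩ := Finset.exists_mem_eq_sup' (hAminne j) w
    rw [hbe, ha]
    exact ⟨hwm a, hwM a⟩
  -- dtr y (v j) = Sj j - Ij j
  have hdy : ∀ j, dtr q y (v j) = Sj j - Ij j := by
    intro j; rw [hSj, hIj]; rfl
  -- dtr x y = Mu - ml
  have hdxy : dtr q x y = Mu - ml := by
    have h1 : (Finset.univ.sup' Finset.univ_nonempty fun i => y i - x i) = -ml := by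
      apply le_antisymm
      · apply Finset.sup'_le
        intro i _
        have h := hwm i
        rw [hw i] at h
        linarith
      · obtain ⟨a, -, ha⟩ := Finset.exists_mem_eq_inf' Finset.univ_nonempty w
        have h2 : y a - x a = -ml := by rw [hml, ha, hw a]; ring
        rw [← h2]
        exact Finset.le_sup' (fun i => y i - x i) (Finset.mem_univ a)
    have h2 : (Finset.univ.inf' Finset.univ_nonempty fun i => y i - x i) = -Mu := by
      apply le_antisymm
      · obtain ⟨a, -, ha⟩ := Finset.exists_mem_eq_sup' Finset.univ_nonempty w
        have h3 : y a - x a = -Mu := by rw [hMu, ha, hw a]; ring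
        rw [← h3]
        exact Finset.inf'_le (fun i => y i - x i) (Finset.mem_univ a)
      · apply Finset.le_inf'
        intro i _
        have h := hwM i
        rw [hw i] at h
        linarith
    rw [dtr, h1, h2]; ring
  -- step A: per-sample inequality
  have hstepA : ∀ j, dtr q y (v j) + (be j - al j) ≤ dtr q x (v j) := by
    intro j
    obtain ⟨a, hamem, ha⟩ := Finset.exists_mem_eq_inf' (hAmaxne j) w
    obtain ⟨b, hbmem, hb⟩ := Finset.exists_mem_eq_sup' (hAminne j) w
    have haS : v j a - y a = Sj j := (Finset.mem_filter.1 hamem).2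
    have hbI : v j b - y b = Ij j := (Finset.mem_filter.1 hbmem).2
    have h1 : Sj j - w a ≤ Finset.univ.sup' Finset.univ_nonempty (fun i => v j i - x i) := by
      have heq : Sj j - w a = v j a - x a := by rw [← haS, hw a]; ring
      rw [heq]
      exact Finset.le_sup' (fun i => v j i - x i) (Finset.mem_univ a)
    have h2 : Finset.univ.inf' Finset.univ_nonempty (fun i => v j i - x i) ≤ Ij j - w b := by
      have heq : Ij j - w b = v j b - x b := by rw [← hbI, hw b]; ring
      rw [heq]
      exact Finset.inf'_le (fun i => v j i - x i) (Finset.mem_univ b)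
    have h3 : dtr q x (v j) = Finset.univ.sup' Finset.univ_nonempty (fun i => v j i - x i)
        - Finset.univ.inf' Finset.univ_nonempty (fun i => v j i - x i) := rfl
    rw [hdy j, h3, hal, hbe, ha, hb]
    linarith
  -- the minimal positive gap
  obtain ⟨ε, hε, hgap⟩ : ∃ ε, 0 < ε ∧ ∀ (j : Fin n) (i : Fin q),
      (v j i - y i < Sj j → v j i - y i + ε ≤ Sj j) ∧
      (Ij j < v j i - y i → Ij j + ε ≤ v j i - y i) := by
    set F : Finset ℝ := (((Finset.univ : Finset (Fin n × Fin q)).image fun p => Sj p.1 - (v p.1 p.2 - y p.2)) ∪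
      ((Finset.univ : Finset (Fin n × Fin q)).image fun p => (v p.1 p.2 - y p.2) - Ij p.1)).filter (fun r => 0 < r) with hF
    by_cases hFne : F.Nonempty
    · refine ⟨F.min' hFne, (Finset.mem_filter.1 (F.min'_mem hFne)).2, ?_⟩
      intro j i
      constructor
      · intro h
        have hmem : Sj j - (v j i - y i) ∈ F := Finset.mem_filter.2
          ⟨Finset.mem_union_left _ (Finset.mem_image.2 ⟨(j,i), Finset.mem_univ _, rfl⟩), by linarith⟩
        have := F.min'_le _ hmem
        linarith
      · intro h
        have hmem : (v j i - y i) - Ij j ∈ F := Finset.mem_filter.2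
          ⟨Finset.mem_union_right _ (Finset.mem_image.2 ⟨(j,i), Finset.mem_univ _, rfl⟩), by linarith⟩
        have := F.min'_le _ hmem
        linarith
    · refine ⟨1, one_pos, ?_⟩
      intro j i
      constructor
      · intro h
        exact absurd ⟨Sj j - (v j i - y i), Finset.mem_filter.2
          ⟨Finset.mem_union_left _ (Finset.mem_image.2 ⟨(j,i), Finset.mem_univ _, rfl⟩), by linarith⟩⟩ hFne
      · intro h
        exact absurd ⟨(v j i - y i) - Ij j, Finset.mem_filter.2
          ⟨Finset.mem_union_right _ (Finset.mem_image.2 ⟨(j,i), Finset.mem_univ _, rfl⟩), by linarith⟩⟩ hFne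
  -- counting inequality from the directional derivative hypothesis
  have hcount : ∀ c, ml < c → c ≤ Mu →
      (1:ℝ) ≤ ∑ j, ((if c ≤ be j then (1:ℝ) else 0) - (if c ≤ al j then (1:ℝ) else 0)) := by
    intro c hc1 hc2
    have hUne : ({a : Fin q | c ≤ x a - y a} : Set (Fin q)).Nonempty := by
      obtain ⟨a, -, ha⟩ := Finset.exists_mem_eq_sup' Finset.univ_nonempty w
      refine ⟨a, ?_⟩
      have : c ≤ w a := by rw [← ha, ← hMu]; exact hc2
      rw [hw a] at this
      exact this
    have hUprop : ({a : Fin q | c ≤ x a - y a} : Set (Fin q)) ≠ Set.univ := by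
      obtain ⟨b, -, hb⟩ := Finset.exists_mem_eq_inf' Finset.univ_nonempty w
      intro hcontra
      have hmem : b ∈ ({a : Fin q | c ≤ x a - y a} : Set (Fin q)) := hcontra ▸ Set.mem_univ b
      have h4 : c ≤ x b - y b := hmem
      rw [← hw b, ← hb, ← hml] at h4
      linarith
    obtain ⟨L, hL, htd⟩ := hderiv {a : Fin q | c ≤ x a - y a} ⟨c, rfl⟩ hUne hUprop
    -- indicator facts
    have hu1 : ∀ i, c ≤ w i →
        ({a : Fin q | c ≤ x a - y a} : Set (Fin q)).indicator (fun _ => (1:ℝ)) i = 1 := by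
      intro i hi
      rw [hw i] at hi
      exact Set.indicator_of_mem (show i ∈ {a : Fin q | c ≤ x a - y a} from hi) _
    have hu0 : ∀ i, ¬ c ≤ w i →
        ({a : Fin q | c ≤ x a - y a} : Set (Fin q)).indicator (fun _ => (1:ℝ)) i = 0 := by
      intro i hi
      rw [hw i] at hi
      exact Set.indicator_of_notMem (show i ∉ {a : Fin q | c ≤ x a - y a} from hi) _
    have hu01 : ∀ i, ({a : Fin q | c ≤ x a - y a} : Set (Fin q)).indicator (fun _ => (1:ℝ)) i = 0 ∨
        ({a : Fin q | c ≤ x a - y a} : Set (Fin q)).indicator (fun _ => (1:ℝ)) i = 1 := by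
      intro i
      by_cases h : c ≤ w i
      · exact Or.inr (hu1 i h)
      · exact Or.inl (hu0 i h)
    -- evaluation of the difference quotient for small t
    have heval : ∀ t : ℝ, 0 < t → t < ε →
        (fwFun q n v (y + t • ({a : Fin q | c ≤ x a - y a} : Set (Fin q)).indicator (fun _ => (1:ℝ))) - fwFun q n v y) / t
          = (1/(n:ℝ)) * ∑ j, ((if c ≤ be j then (1:ℝ) else 0) - (if c ≤ al j then (1:ℝ) else 0)) := by
      intro t ht htε
      have hterm : ∀ j, dtr q (y + t • ({a : Fin q | c ≤ x a - y a} : Set (Fin q)).indicator (fun _ => (1:ℝ))) (v j)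
          = (Sj j - t * (if c ≤ al j then (1:ℝ) else 0)) - (Ij j - t * (if c ≤ be j then (1:ℝ) else 0)) := by
        intro j
        have hfun : (fun i => v j i - (y + t • ({a : Fin q | c ≤ x a - y a} : Set (Fin q)).indicator (fun _ => (1:ℝ))) i)
            = fun i => (v j i - y i) - t * ({a : Fin q | c ≤ x a - y a} : Set (Fin q)).indicator (fun _ => (1:ℝ)) i := by
          funext i
          simp [Pi.add_apply, Pi.smul_apply, smul_eq_mul]
          ring
        have hsup : Finset.univ.sup' Finset.univ_nonempty
            (fun i => (v j i - y i) - t * ({a : Fin q | c ≤ x a - y a} : Set (Fin q)).indicator (fun _ => (1:ℝ)) i)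
            = Sj j - t * (if c ≤ al j then (1:ℝ) else 0) := by
          by_cases hca : c ≤ al j
          · rw [if_pos hca, mul_one, hSj]
            apply sup'_pert_in _ _ t ε ht htε hu01
            · intro i hi
              rw [← hSj] at hi ⊢
              exact (hgap j i).1 hi
            · intro i hi
              rw [← hSj] at hi
              apply hu1 i
              refine le_trans hca ?_
              rw [hal]
              exact Finset.inf'_le w (Finset.mem_filter.2 ⟨Finset.mem_univ i, hi⟩)
          · rw [if_neg hca, mul_zero, hSj]
            have hex : ∃ a₀, v j a₀ - y a₀ = Sj j ∧ ¬ c ≤ w a₀ := by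
              by_contra hcon
              push_neg at hcon
              apply hca
              rw [hal]
              apply Finset.le_inf'
              intro i hi
              exact hcon i (Finset.mem_filter.1 hi).2
            obtain ⟨a₀, ha1, ha2⟩ := hex
            have hres := sup'_pert_out (fun i => v j i - y i)
              (({a : Fin q | c ≤ x a - y a} : Set (Fin q)).indicator (fun _ => (1:ℝ))) t ht.le hu01
              ⟨a₀, by rw [← hSj]; exact ha1, hu0 a₀ ha2⟩
            rw [hres]
            ring
        have hinf : Finset.univ.inf' Finset.univ_nonempty
            (fun i => (v j i - y i) - t * ({a : Fin q | c ≤ x a - y a} : Set (Fin q)).indicator (fun _ => (1:ℝ)) i)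
            = Ij j - t * (if c ≤ be j then (1:ℝ) else 0) := by
          by_cases hcb : c ≤ be j
          · rw [if_pos hcb, mul_one, hIj]
            obtain ⟨b, hbmem, hb⟩ := Finset.exists_mem_eq_sup' (hAminne j) w
            apply inf'_pert_in _ _ t ht.le hu01
            refine ⟨b, ?_, ?_⟩
            · rw [← hIj]
              exact (Finset.mem_filter.1 hbmem).2
            · apply hu1 b
              rw [← hb, ← hbe]
              exact hcb
          · rw [if_neg hcb, mul_zero, sub_zero, hIj]
            apply inf'_pert_out _ _ t ε ht htε hu01
            · intro i hi
              rw [← hIj] at hi ⊢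
              exact (hgap j i).2 hi
            · intro i hi
              rw [← hIj] at hi
              apply hu0 i
              intro hci
              apply hcb
              refine le_trans hci ?_
              rw [hbe]
              exact Finset.le_sup' w (Finset.mem_filter.2 ⟨Finset.mem_univ i, hi⟩)
        have hdd : dtr q (y + t • ({a : Fin q | c ≤ x a - y a} : Set (Fin q)).indicator (fun _ => (1:ℝ))) (v j)
            = Finset.univ.sup' Finset.univ_nonempty
              (fun i => v j i - (y + t • ({a : Fin q | c ≤ x a - y a} : Set (Fin q)).indicator (fun _ => (1:ℝ))) i)
            - Finset.univ.inf' Finset.univ_nonempty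
              (fun i => v j i - (y + t • ({a : Fin q | c ≤ x a - y a} : Set (Fin q)).indicator (fun _ => (1:ℝ))) i) := rfl
        rw [hdd, hfun, hsup, hinf]
      have h1 : fwFun q n v (y + t • ({a : Fin q | c ≤ x a - y a} : Set (Fin q)).indicator (fun _ => (1:ℝ))) - fwFun q n v y
          = (1/(n:ℝ)) * ∑ j, (t * ((if c ≤ be j then (1:ℝ) else 0) - (if c ≤ al j then (1:ℝ) else 0))) := by
        unfold fwFun
        rw [← mul_sub, ← Finset.sum_sub_distrib]
        congr 1
        apply Finset.sum_congr rfl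
        intro j _
        rw [hterm j, hdy j]
        ring
      rw [h1, ← Finset.mul_sum]
      have ht' : t ≠ 0 := ne_of_gt ht
      field_simp
    -- the difference quotient tends to the explicit constant
    have hmem : Set.Ioo (0:ℝ) ε ∈ 𝓝[>] (0:ℝ) := Ioo_mem_nhdsGT_of_mem ⟨le_refl 0, hε⟩
    have hEq : (fun t : ℝ =>
        (fwFun q n v (y + t • ({a : Fin q | c ≤ x a - y a} : Set (Fin q)).indicator (fun _ => (1:ℝ))) - fwFun q n v y) / t)
        =ᶠ[𝓝[>] (0:ℝ)]
        (fun _ => (1/(n:ℝ)) * ∑ j, ((if c ≤ be j then (1:ℝ) else 0) - (if c ≤ al j then (1:ℝ) else 0))) := by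
      filter_upwards [hmem] with t htm
      exact heval t htm.1 htm.2
    have htd2 : Tendsto (fun t : ℝ =>
        (fwFun q n v (y + t • ({a : Fin q | c ≤ x a - y a} : Set (Fin q)).indicator (fun _ => (1:ℝ))) - fwFun q n v y) / t)
        (𝓝[>] (0:ℝ))
        (𝓝 ((1/(n:ℝ)) * ∑ j, ((if c ≤ be j then (1:ℝ) else 0) - (if c ≤ al j then (1:ℝ) else 0)))) :=
      Filter.Tendsto.congr' hEq.symm tendsto_const_nhds
    have hLeq : L = (1/(n:ℝ)) * ∑ j, ((if c ≤ be j then (1:ℝ) else 0) - (if c ≤ al j then (1:ℝ) else 0)) :=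
      tendsto_nhds_unique htd htd2
    have h1n : (0:ℝ) < 1/n := by positivity
    have hfin : 1/(n:ℝ) * 1 ≤ 1/(n:ℝ) * ∑ j, ((if c ≤ be j then (1:ℝ) else 0) - (if c ≤ al j then (1:ℝ) else 0)) := by
      rw [mul_one]
      calc (1:ℝ)/n ≤ L := hL
      _ = _ := hLeq
    exact le_of_mul_le_mul_left hfin h1n
  -- apply the layer-cake lemma
  have hkey : Mu - ml ≤ ∑ j, (be j - al j) :=
    key al be ml Mu hmM (fun j => (halm j).1) (fun j => (halm j).2)
      (fun j => (hbem j).1) (fun j => (hbem j).2) hcount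
  have hsum : ∑ j, (be j - al j) ≤ ∑ j, (dtr q x (v j) - dtr q y (v j)) :=
    Finset.sum_le_sum (fun j _ => by linarith [hstepA j])
  have hfx : fwFun q n v x - fwFun q n v y = (1/(n:ℝ)) * ∑ j, (dtr q x (v j) - dtr q y (v j)) := by
    unfold fwFun
    rw [← mul_sub, ← Finset.sum_sub_distrib]
  calc dtr q x y / n = (1/(n:ℝ)) * (Mu - ml) := by rw [hdxy]; ring
  _ ≤ (1/(n:ℝ)) * ∑ j, (be j - al j) := by
      apply mul_le_mul_of_nonneg_left hkey
      positivity
  _ ≤ (1/(n:ℝ)) * ∑ j, (dtr q x (v j) - dtr q y (v j)) := by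
      apply mul_le_mul_of_nonneg_left hsum
      positivity
  _ = fwFun q n v x - fwFun q n v y := hfx.symm
end
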